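/- arXiv:1906.09476 — 3 statements merged into one kernel-verified Lean document; each statement's English description precedes it below -/
import Mathlib

section
/- Let B = (C, μ, ε, δ) be a differential graded S-bocs. Then the induction assignment Φ(M) = (M⊗_S C, id_M⊗μ), Φ(f) = (f⊗id_C)(id_M⊗μ) defines a fully faithful functor of graded categories Φ : GMod-B → GComod-B into graded right B-comodules; for each degree d, the map Hom^d_{GMod-S}(M⊗_S C, N) → Hom^d_{GComod-B}(Ind_B(M), Ind_B(N)) is a linear isomorphism with inverse φ ↦ ρ_N(id_N⊗ε) ∘ φ. -/
/-!
**Statement 9.**  Let `B = (C, μ, ε, δ)` be a (differential) graded `S`-bocs, viewed as a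
comonoid object `C` in the monoidal category `V` of graded `S`-`S`-bimodules (we work with
an arbitrary monoidal category `V`; the differential `δ` plays no role in this statement).
`GMod-B` has `Hom(M,N) = (M ⊗ C ⟶ N)` with composition
`g * f = (id ⊗ μ) ≫ (f ⊗ id) ≫ g` and identity `(id ⊗ ε) ≫ ρ_M`; a graded right
`B`-comodule is a pair `(X, ρX : X ⟶ X ⊗ C)` satisfying the coassociativity and counit
laws, and `Ind_B(M) = (M ⊗ C, (id_M ⊗ μ) ≫ α⁻¹)`.

Theorem: `Φ(M) = Ind_B(M)`, `Φ(f) = (id_M ⊗ μ) ≫ α⁻¹ ≫ (f ⊗ id_C)` is a fully faithful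
functor `GMod-B → GComod-B`: each `Ind_B(M)` is a graded `B`-comodule, `Φ(f)` is a comodule
morphism, `Φ` preserves identities and composition, and `f ↦ Φ(f)` is a bijection onto the
comodule morphisms `Ind_B(M) → Ind_B(N)`, with inverse `φ ↦ φ ≫ (id_N ⊗ ε) ≫ ρ_N`.
-/

open CategoryTheory MonoidalCategory

open CategoryTheory MonoidalCategory in
private lemma ind_counit {V : Type*} [Category V] [MonoidalCategory V]
    {C : V} {μ : C ⟶ C ⊗ C} {ε : C ⟶ 𝟙_ V}
    (hcounit_r : μ ≫ (C ◁ ε) ≫ (ρ_ C).hom = 𝟙 C) (M : V) :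
    ((M ◁ μ) ≫ (α_ M C C).inv) ≫ ((M ⊗ C) ◁ ε) ≫ (ρ_ (M ⊗ C)).hom = 𝟙 (M ⊗ C) := by
  have := congrArg (fun g => M ◁ g) hcounit_r
  simp only [MonoidalCategory.whiskerLeft_comp, MonoidalCategory.whiskerLeft_id] at this
  simp only [Category.assoc, ← associator_inv_naturality_right_assoc]
  have hα : (α_ M C (𝟙_ V)).inv ≫ (ρ_ (M ⊗ C)).hom = M ◁ (ρ_ C).hom := by simp
  rw [hα, this]

open CategoryTheory MonoidalCategory in
private lemma ind_comod_hom {V : Type*} [Category V] [MonoidalCategory V]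
    {C : V} {μ : C ⟶ C ⊗ C}
    (hcoassoc : μ ≫ (μ ▷ C) ≫ (α_ C C C).hom = μ ≫ (C ◁ μ))
    {M N : V} (f : M ⊗ C ⟶ N) :
    ((M ◁ μ) ≫ (α_ M C C).inv ≫ (f ▷ C)) ≫ ((N ◁ μ) ≫ (α_ N C C).inv) =
      ((M ◁ μ) ≫ (α_ M C C).inv) ≫
        (((M ◁ μ) ≫ (α_ M C C).inv ≫ (f ▷ C)) ▷ C) := by
  have := congrArg (fun g => M ◁ g) hcoassoc
  simp only [MonoidalCategory.whiskerLeft_comp] at this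
  simp only [comp_whiskerRight, Category.assoc, whisker_assoc,
    Iso.inv_hom_id_assoc, ← whisker_exchange_assoc,
    ← associator_inv_naturality_left, ← associator_inv_naturality_right_assoc]
  rw [← reassoc_of% this]
  coherence


theorem induction_functor_fully_faithful
    {V : Type*} [Category V] [MonoidalCategory V]
    (C : V) (μ : C ⟶ C ⊗ C) (ε : C ⟶ 𝟙_ V)
    (hcounit_r : μ ≫ (C ◁ ε) ≫ (ρ_ C).hom = 𝟙 C)
    (hcounit_l : μ ≫ (ε ▷ C) ≫ (λ_ C).hom = 𝟙 C)
    (hcoassoc : μ ≫ (μ ▷ C) ≫ (α_ C C C).hom = μ ≫ (C ◁ μ)) :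
    -- (a) each `Ind_B(M) = (M ⊗ C, (id_M ⊗ μ) ≫ α⁻¹)` is a graded right `B`-comodule:
    (∀ M : V,
        ((M ◁ μ) ≫ (α_ M C C).inv) ≫ (((M ◁ μ) ≫ (α_ M C C).inv) ▷ C)
            ≫ (α_ (M ⊗ C) C C).hom =
          ((M ◁ μ) ≫ (α_ M C C).inv) ≫ ((M ⊗ C) ◁ μ) ∧
        ((M ◁ μ) ≫ (α_ M C C).inv) ≫ ((M ⊗ C) ◁ ε) ≫ (ρ_ (M ⊗ C)).hom = 𝟙 (M ⊗ C)) ∧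
      -- (b) `Φ(f)` is a morphism of graded `B`-comodules `Ind_B(M) → Ind_B(N)`:
      (∀ {M N : V} (f : M ⊗ C ⟶ N),
        ((M ◁ μ) ≫ (α_ M C C).inv ≫ (f ▷ C)) ≫ ((N ◁ μ) ≫ (α_ N C C).inv) =
          ((M ◁ μ) ≫ (α_ M C C).inv) ≫
            (((M ◁ μ) ≫ (α_ M C C).inv ≫ (f ▷ C)) ▷ C)) ∧
      -- (c) `Φ` preserves identities:
      (∀ M : V,
        (M ◁ μ) ≫ (α_ M C C).inv ≫ (((M ◁ ε) ≫ (ρ_ M).hom) ▷ C) = 𝟙 (M ⊗ C)) ∧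
      -- (d) `Φ` preserves composition (`Φ(g * f) = Φ(f) ≫ Φ(g)`):
      (∀ {M N L : V} (g : N ⊗ C ⟶ L) (f : M ⊗ C ⟶ N),
        (M ◁ μ) ≫ (α_ M C C).inv ≫
            ((((M ◁ μ) ≫ (α_ M C C).inv ≫ (f ▷ C)) ≫ g) ▷ C) =
          ((M ◁ μ) ≫ (α_ M C C).inv ≫ (f ▷ C)) ≫
            ((N ◁ μ) ≫ (α_ N C C).inv ≫ (g ▷ C))) ∧
      -- (e) `Φ` is fully faithful, with inverse `φ ↦ φ ≫ (id_N ⊗ ε) ≫ ρ_N` on hom sets: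
      (∀ {M N : V} (f : M ⊗ C ⟶ N),
        ((M ◁ μ) ≫ (α_ M C C).inv ≫ (f ▷ C)) ≫ (N ◁ ε) ≫ (ρ_ N).hom = f) ∧
      (∀ {M N : V} (φ : M ⊗ C ⟶ N ⊗ C),
        φ ≫ ((N ◁ μ) ≫ (α_ N C C).inv) =
            ((M ◁ μ) ≫ (α_ M C C).inv) ≫ (φ ▷ C) →
        (M ◁ μ) ≫ (α_ M C C).inv ≫ ((φ ≫ (N ◁ ε) ≫ (ρ_ N).hom) ▷ C) = φ) := by
  refine ⟨fun M => ⟨?_, ind_counit hcounit_r M⟩, fun {M N} f => ind_comod_hom hcoassoc f,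
    fun M => ?_, fun {M N L} g f => ?_, fun {M N} f => ?_, fun {M N} φ hφ => ?_⟩
  · have := congrArg (fun g => M ◁ g) hcoassoc
    simp only [MonoidalCategory.whiskerLeft_comp] at this
    simp only [comp_whiskerRight, Category.assoc, whisker_assoc]
    simp [← whisker_exchange, ← associator_inv_naturality_middle_assoc,
      ← associator_inv_naturality_right_assoc, pentagon_inv_assoc]
    rw [reassoc_of% this]
  · have := congrArg (fun g => M ◁ g) hcounit_l
    simp only [MonoidalCategory.whiskerLeft_comp, MonoidalCategory.whiskerLeft_id] at this
    simp only [comp_whiskerRight, Category.assoc, whisker_assoc, Iso.inv_hom_id_assoc]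
    have hα : (α_ M (𝟙_ V) C).inv ≫ (ρ_ M).hom ▷ C = M ◁ (λ_ C).hom := by simp
    rw [hα, this]
  · have hb := ind_comod_hom hcoassoc (μ := μ) f
    simp only [comp_whiskerRight, Category.assoc] at hb ⊢
    rw [reassoc_of% hb]
  · have := congrArg (fun g => M ◁ g) hcounit_r
    simp only [MonoidalCategory.whiskerLeft_comp, MonoidalCategory.whiskerLeft_id] at this
    simp only [Category.assoc, ← whisker_exchange_assoc, rightUnitor_naturality,
      ← associator_inv_naturality_right_assoc]
    have hα : (α_ M C (𝟙_ V)).inv ≫ (ρ_ (M ⊗ C)).hom = M ◁ (ρ_ C).hom := by simp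
    rw [reassoc_of% hα, reassoc_of% this]
  · have := congrArg (fun g => N ◁ g) hcounit_l
    simp only [MonoidalCategory.whiskerLeft_comp, MonoidalCategory.whiskerLeft_id] at this
    simp only [comp_whiskerRight, Category.assoc]
    rw [← reassoc_of% hφ]
    simp only [Category.assoc, ← associator_inv_naturality_middle_assoc]
    have hα : (α_ N (𝟙_ V) C).inv ≫ (ρ_ N).hom ▷ C = N ◁ (λ_ C).hom := by simp
    rw [hα, this, Category.comp_id]
end

section
/- Let B be a triangular graded S-bocs: a normal graded S-bocs whose reduced part C̄ carries an exhaustive filtration 0 = C̄₀ ⊆ C̄₁ ⊆ ⋯ of graded sub-bimodules with μ̄(C̄ᵢ) ⊆ C̄_{i−1}⊗C̄_{i−1} and δ̄(C̄ᵢ) ⊆ C̄ᵢ. Let f = (0, f¹) : M → M be a degree-0 endomorphism in 𝕄od-B with vanishing first component. Then f is locally nilpotent: for each x ∈ C̄ there is n_x ∈ ℕ such that (fⁿ)¹(m⊗x) = 0 for all n ≥ n_x and all m ∈ M. Consequently the infinite sum Σ_{n≥1} fⁿ is a well-defined endomorphism of M in 𝕄od-B. -/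
/-!
**Statement 13.**  Let `B` be a triangular graded `S`-bocs: normal, with an exhaustive
filtration `0 = C̄₀ ⊆ C̄₁ ⊆ ⋯` of the reduced part `C̄` by graded sub-bimodules with
`μ̄(C̄ᵢ) ⊆ C̄_{i−1} ⊗ C̄_{i−1}` and `δ̄(C̄ᵢ) ⊆ C̄ᵢ`.  For a graded right `S`-module `M`
(underlying group `Mc`) let `TM = M ⊗_S C̄` and `TMM = M ⊗_S C̄ ⊗_S C̄`, with pure tensors
`tmul : Mc → C̄ → TM`, `tmul2 : TM → C̄ → TMM`, and let `tmap g = g ⊗ id_{C̄}`,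
`tmap1 g = g ⊗ id_{C̄}`, `mubT = id_M ⊗ μ̄`.  In `𝕄od-B` a degree-0 endomorphism
`f = (0, f¹)` has powers with first component zero and second component satisfying
`(f^{n+1})¹ = (fⁿ)¹ ∘ (0 ⊗ id) + (fⁿ)¹ ∘ (f¹ ⊗ id) ∘ (id ⊗ μ̄)`.

Theorem: `f` is locally nilpotent — for each `x ∈ C̄` there is `n_x` with
`(fⁿ)¹(m ⊗ x) = 0` for all `n ≥ n_x` and all `m ∈ M` — and consequently the infinite sum
`Σ_{n ≥ 1} fⁿ` is a well-defined endomorphism of `M` in `𝕄od-B`.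
-/

theorem locally_nilpotent_endomorphisms_over_triangular_bocs
    {Cb : Type} [AddCommGroup Cb]
    {Mc : Type} [AddCommGroup Mc]
    {TM : Type} [AddCommGroup TM]
    {TMM : Type} [AddCommGroup TMM]
    -- the triangular filtration of `C̄`:
    (F : ℕ → AddSubgroup Cb)
    (hF0 : F 0 = ⊥) (hFmono : Monotone F) (hFexh : ∀ x : Cb, ∃ i, x ∈ F i)
    (δb : Cb →+ Cb) (hδb : ∀ (i : ℕ) (x : Cb), x ∈ F i → δb x ∈ F i)
    -- pure tensors of `TM = M ⊗ C̄` and `TMM = M ⊗ C̄ ⊗ C̄`: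
    (tmul : Mc →+ Cb →+ TM) (tmul2 : TM →+ Cb →+ TMM)
    (hgen : AddSubgroup.closure {t : TM | ∃ (m : Mc) (x : Cb), t = tmul m x} = ⊤)
    -- `g ⊗ id_{C̄}` in its two versions, and `id_M ⊗ μ̄`:
    (tmap : (Mc →+ Mc) → (TM →+ TM))
    (htmap : ∀ (g : Mc →+ Mc) (m : Mc) (x : Cb), tmap g (tmul m x) = tmul (g m) x)
    (tmap1 : (TM →+ Mc) → (TMM →+ TM))
    (htmap1 : ∀ (g : TM →+ Mc) (t : TM) (y : Cb), tmap1 g (tmul2 t y) = tmul (g t) y)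
    (mubT : TM →+ TMM)
    -- triangularity: `μ̄(C̄_{i+1}) ⊆ C̄ᵢ ⊗ C̄ᵢ`, via `μ̄ x = Σ_j y_j ⊗ z_j`:
    (htriang : ∀ (i : ℕ) (x : Cb), x ∈ F (i + 1) →
      ∃ (n : ℕ) (y z : Fin n → Cb), (∀ j, y j ∈ F i ∧ z j ∈ F i) ∧
        ∀ m : Mc, mubT (tmul m x) = ∑ j, tmul2 (tmul m (y j)) (z j))
    -- the endomorphism `f = (0, f¹)` of `M` in `𝕄od-B` and its powers `p n = (fⁿ)¹`:
    (f1 : TM →+ Mc)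
    (p : ℕ → (TM →+ Mc))
    (hp1 : p 1 = f1)
    (hpsucc : ∀ n : ℕ, 1 ≤ n →
      p (n + 1) = (p n).comp (tmap (0 : Mc →+ Mc)) +
        (p n).comp ((tmap1 f1).comp mubT)) :
    -- local nilpotence:
    (∀ x : Cb, ∃ nx : ℕ, ∀ n : ℕ, nx ≤ n → 1 ≤ n → ∀ m : Mc, p n (tmul m x) = 0) ∧
      -- hence `Σ_{n≥1} fⁿ` is a well-defined morphism in `𝕄od-B`
      -- (its first component is `0`, its second component is the following `g`):
      (∃ g : TM →+ Mc, ∀ (m : Mc) (x : Cb), ∃ N₀ : ℕ, ∀ n : ℕ, N₀ ≤ n →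
        g (tmul m x) = ∑ j ∈ Finset.Icc 1 n, p j (tmul m x)) := by
  -- key vanishing lemma by induction on the filtration index
  have key : ∀ i : ℕ, ∀ x ∈ F i, ∀ n : ℕ, i + 1 ≤ n → ∀ m : Mc, p n (tmul m x) = 0 := by
    intro i
    induction i with
    | zero =>
      intro x hx n hn m
      rw [hF0] at hx
      simp only [AddSubgroup.mem_bot] at hx
      subst hx
      simp
    | succ i ih =>
      intro x hx n hn m
      obtain ⟨k, rfl⟩ : ∃ k, n = k + 1 := ⟨n - 1, by omega⟩
      rw [hpsucc k (by omega)]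
      simp only [AddMonoidHom.add_apply, AddMonoidHom.coe_comp, Function.comp_apply]
      rw [htmap 0 m x]
      simp only [AddMonoidHom.zero_apply, map_zero]
      obtain ⟨N, y, z, hyz, heq⟩ := htriang i x hx
      rw [heq m, map_sum, map_sum]
      rw [Finset.sum_eq_zero]
      · simp
      · intro j _
        rw [htmap1 f1 (tmul m (y j)) (z j)]
        exact ih (z j) (hyz j).2 k (by omega) _
  have nil : ∀ x : Cb, ∃ nx : ℕ, ∀ n : ℕ, nx ≤ n → 1 ≤ n → ∀ m : Mc, p n (tmul m x) = 0 := by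
    intro x
    obtain ⟨i, hi⟩ := hFexh x
    exact ⟨i + 1, fun n hn _ m => key i x hi n hn m⟩
  refine ⟨nil, ?_⟩
  -- partial sums
  set S : ℕ → TM → Mc := fun n t => ∑ j ∈ Finset.Icc 1 n, p j t with hS
  have Sadd : ∀ n a b, S n (a + b) = S n a + S n b := by
    intro n a b
    simp [hS, map_add, Finset.sum_add_distrib]
  have hstab : ∀ t : TM, ∃ n, ∀ k, n ≤ k → S k t = S n t := by
    intro t
    have ht : t ∈ AddSubgroup.closure {t : TM | ∃ (m : Mc) (x : Cb), t = tmul m x} := by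
      rw [hgen]; trivial
    induction ht using AddSubgroup.closure_induction with
    | mem t htm =>
      obtain ⟨m, x, rfl⟩ := htm
      obtain ⟨nx, hnx⟩ := nil x
      refine ⟨nx + 1, fun k hk => ?_⟩
      rw [hS]
      refine (Finset.sum_subset (Finset.Icc_subset_Icc le_rfl (by omega)) ?_).symm
      intro j hj hj'
      simp only [Finset.mem_Icc] at hj hj'
      exact hnx j (by omega) (by omega) m
    | zero => exact ⟨0, fun k _ => by simp [hS]⟩
    | add a b _ _ iha ihb =>
      obtain ⟨na, hna⟩ := iha
      obtain ⟨nb, hnb⟩ := ihb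
      refine ⟨max na nb, fun k hk => ?_⟩
      rw [Sadd, Sadd, hna k (le_trans (le_max_left _ _) hk),
        hnb k (le_trans (le_max_right _ _) hk),
        ← hna (max na nb) (le_max_left _ _), ← hnb (max na nb) (le_max_right _ _)]
    | neg a _ iha =>
      obtain ⟨na, hna⟩ := iha
      refine ⟨na, fun k hk => ?_⟩
      have : ∀ n, S n (-a) = - S n a := by
        intro n; simp [hS, map_neg, Finset.sum_neg_distrib]
      rw [this, this, hna k hk]
  choose N hN using hstab
  refine ⟨{ toFun := fun t => S (N t) t
            map_zero' := by simp [hS]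
            map_add' := ?_ }, ?_⟩
  · intro a b
    have h1 := hN (a + b) (max (N (a+b)) (max (N a) (N b))) (le_max_left _ _)
    have h2 := hN a (max (N (a+b)) (max (N a) (N b)))
      (le_trans (le_max_left _ _) (le_max_right _ _))
    have h3 := hN b (max (N (a+b)) (max (N a) (N b)))
      (le_trans (le_max_right _ _) (le_max_right _ _))
    show S (N (a + b)) (a + b) = S (N a) a + S (N b) b
    rw [← h1, ← h2, ← h3, Sadd]
  · intro m x
    refine ⟨N (tmul m x), fun n hn => ?_⟩
    exact (hN (tmul m x) n hn).symm
end

section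
/- Let B be a triangular graded S-bocs and f : (M,u) → (N,v) a degree-0 morphism of twisted B-modules. Then f is an isomorphism in TGMod⁰-B if and only if its first component f⁰ : M → N is an isomorphism of graded right S-modules. In particular, if f is invertible as a morphism in GMod-B, then its inverse g automatically satisfies δ̂(g) = g*v − u*g and is a morphism of twisted modules (N,v) → (M,u). -/
/-!
**Statement 15.**  `GMod-B`, for a triangular differential graded `S`-bocs `B`, is modelled
abstractly as a differential graded category (composition `comp`, identities `one`,
differential `d`, homogeneity `homog`).  The predicate `iso0 f` means "the first component
`f⁰ : M → N` of `f` is an isomorphism of graded right `S`-modules"; triangularity of `B`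
grants (context) that a degree-0 morphism of `GMod-B` is invertible iff `iso0` holds for it.

Theorem: a degree-0 morphism of twisted modules `f : (M,u) → (N,v)` is an isomorphism in
`TGMod⁰-B` iff its first component `f⁰` is an isomorphism of graded right `S`-modules;
moreover, if `g` is a two-sided inverse of `f` in `GMod-B`, then `g` automatically satisfies
`d g = g*v − u*g`, i.e. `g` is a morphism of twisted modules `(N,v) → (M,u)`.
-/

theorem twisted_iso_iff_first_component_iso
    {Obj : Type} (Hom : Obj → Obj → Type) [∀ M N, AddCommGroup (Hom M N)]
    (homog : ∀ {M N : Obj}, Hom M N → ℤ → Prop)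
    (comp : ∀ {M N L : Obj}, Hom N L → Hom M N → Hom M L)
    (one : ∀ M, Hom M M)
    (d : ∀ {M N : Obj}, Hom M N → Hom M N)
    -- the predicate "the first component is an isomorphism of graded `S`-modules":
    (iso0 : ∀ {M N : Obj}, Hom M N → Prop)
    -- dg-category axioms for `GMod-B`:
    (comp_assoc : ∀ {M N L K : Obj} (h : Hom L K) (g : Hom N L) (f : Hom M N),
      comp (comp h g) f = comp h (comp g f))
    (one_comp : ∀ {M N : Obj} (f : Hom M N), comp (one N) f = f)
    (comp_one : ∀ {M N : Obj} (f : Hom M N), comp f (one M) = f)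
    (comp_add_left : ∀ {M N L : Obj} (g g' : Hom N L) (f : Hom M N),
      comp (g + g') f = comp g f + comp g' f)
    (comp_add_right : ∀ {M N L : Obj} (g : Hom N L) (f f' : Hom M N),
      comp g (f + f') = comp g f + comp g f')
    (d_add : ∀ {M N : Obj} (f f' : Hom M N), d (f + f') = d f + d f')
    (d_sq : ∀ {M N : Obj} (f : Hom M N), d (d f) = 0)
    (d_one : ∀ M, d (one M) = 0)
    (leibniz : ∀ {M N L : Obj} (g : Hom N L) (f : Hom M N) (e : ℤ), homog g e →
      d (comp g f) = comp (d g) f + ((Int.negOnePow e : ℤˣ) : ℤ) • comp g (d f))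
    (homog_comp : ∀ {M N L : Obj} {g : Hom N L} {f : Hom M N} {e e' : ℤ},
      homog g e → homog f e' → homog (comp g f) (e + e'))
    -- triangularity (context): a degree-0 morphism of `GMod-B` is invertible iff
    -- its first component is an isomorphism of graded `S`-modules
    (triangular : ∀ {M N : Obj} (f : Hom M N), homog f 0 →
      (iso0 f ↔ ∃ g : Hom N M, comp g f = one M ∧ comp f g = one N))
    -- the inverse of a homogeneous degree-0 morphism is homogeneous of degree 0
    (homog_inv : ∀ {M N : Obj} (f : Hom M N) (g : Hom N M), homog f 0 →
      comp g f = one M → comp f g = one N → homog g 0)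
    -- twisted modules `(M,u)`, `(N,v)` and a degree-0 morphism of twisted modules `f`:
    {M N : Obj} (u : Hom M M) (v : Hom N N)
    (hu1 : homog u 1) (hv1 : homog v 1)
    (hMC_u : d u + comp u u = 0) (hMC_v : d v + comp v v = 0)
    (f : Hom M N) (hf0 : homog f 0)
    (hfmor : d f + comp v f - comp f u = 0) :
    ((∃ g : Hom N M, homog g 0 ∧ d g + comp u g - comp g v = 0 ∧
        comp g f = one M ∧ comp f g = one N) ↔ iso0 f) ∧
      (∀ g : Hom N M, comp g f = one M → comp f g = one N →
        d g = comp g v - comp u g ∧ d g + comp u g - comp g v = 0) := by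
  have hdf : d f = comp f u - comp v f :=
    eq_sub_of_add_eq (sub_eq_zero.mp hfmor)
  have key : ∀ g : Hom N M, comp g f = one M → comp f g = one N →
      d g = comp g v - comp u g := by
    intro g h1 h2
    have hg0 : homog g 0 := homog_inv f g hf0 h1 h2
    let φ : Hom M N →+ Hom M M := AddMonoidHom.mk' (fun x => comp g x) (comp_add_right g)
    let ψ : Hom M M →+ Hom N M := AddMonoidHom.mk' (fun x => comp x g) (fun a b => comp_add_left a b g)
    have hL : d (comp g f) = comp (d g) f + comp g (d f) := by
      have := leibniz g f 0 hg0
      simpa using this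
    have h0 : d (comp g f) = 0 := by rw [h1, d_one]
    have hdgf : comp (d g) f = - comp g (d f) := by
      have h : comp (d g) f + comp g (d f) = 0 := by rw [← hL, h0]
      exact eq_neg_of_add_eq_zero_left h
    have e1 : comp g (d f) = comp (comp g f) u - comp (comp g v) f := by
      rw [hdf]
      have h : φ (comp f u - comp v f) = φ (comp f u) - φ (comp v f) := map_sub φ _ _
      simp only [φ, AddMonoidHom.mk'_apply] at h
      rw [h, ← comp_assoc, ← comp_assoc]
    have e2 : comp (d g) f = comp (comp g v) f - u := by
      rw [hdgf, e1, h1, one_comp]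
      abel
    have e3 : d g = comp (comp (d g) f) g := by
      rw [comp_assoc, h2, comp_one]
    rw [e3, e2]
    have h : ψ (comp (comp g v) f - u) = ψ (comp (comp g v) f) - ψ u := map_sub ψ _ _
    simp only [ψ, AddMonoidHom.mk'_apply] at h
    rw [h, comp_assoc, h2, comp_one]
  constructor
  · constructor
    · rintro ⟨g, _, _, h1, h2⟩
      exact (triangular f hf0).2 ⟨g, h1, h2⟩
    · intro h
      obtain ⟨g, h1, h2⟩ := (triangular f hf0).1 h
      refine ⟨g, homog_inv f g hf0 h1 h2, ?_, h1, h2⟩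
      rw [key g h1 h2]; abel
  · intro g h1 h2
    refine ⟨key g h1 h2, ?_⟩
    rw [key g h1 h2]; abel
end
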